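/- For all positive real numbers a, k, α, β with βk > α + 1, the integral over the real line of |t|^α · (min(1/4, a^β/|t|^β))^k dt equals (βk / ((α+1)(βk − α − 1))) · 2(4^{1/β} a)^{α+1} / 4^k. -/

import Mathlib

open MeasureTheory Real

theorem integral_abs_rpow_min_rpow (a k α β : ℝ)
    (ha : 0 < a) (hk : 0 < k) (hα : 0 < α) (hβ : 0 < β)
    (h : β * k > α + 1) :
    ∫ t : ℝ, |t| ^ α * (min (1 / 4) (a ^ β / |t| ^ β)) ^ k
      = β * k / ((α + 1) * (β * k - α - 1)) *
        (2 * ((4 : ℝ) ^ (1 / β) * a) ^ (α + 1) / (4 : ℝ) ^ k) := by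
  set c : ℝ := (4 : ℝ) ^ (1 / β) * a with hc_def
  have hc : 0 < c := mul_pos (rpow_pos_of_pos (by norm_num) _) ha
  have hcβ : c ^ β = 4 * a ^ β := by
    rw [hc_def, mul_rpow (by positivity) ha.le,
      ← rpow_mul (by norm_num : (0:ℝ) ≤ 4), one_div_mul_cancel hβ.ne', rpow_one]
  have hcβk : c ^ (β * k) = (4:ℝ) ^ k * a ^ (β * k) := by
    rw [rpow_mul hc.le, hcβ, mul_rpow (by norm_num) (by positivity), rpow_mul ha.le]
  -- equalities on pieces
  have heq1 : ∀ x ∈ Set.Ioc (0:ℝ) c,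
      x ^ α * (min (1/4) (a ^ β / x ^ β)) ^ k = (1/4 : ℝ) ^ k * x ^ α := by
    intro x hx
    have hx0 : 0 < x := hx.1
    have hxβ : (0:ℝ) < x ^ β := rpow_pos_of_pos hx0 _
    have hle : x ^ β ≤ 4 * a ^ β := by
      rw [← hcβ]; exact rpow_le_rpow hx0.le hx.2 hβ.le
    have : (1/4 : ℝ) ≤ a ^ β / x ^ β := by
      rw [le_div_iff₀ hxβ]; linarith
    rw [min_eq_left this]; ring
  have heq2 : ∀ x ∈ Set.Ioi c,
      x ^ α * (min (1/4) (a ^ β / x ^ β)) ^ k = a ^ (β * k) * x ^ (α - β * k) := by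
    intro x hx
    have hx0 : 0 < x := hc.trans hx
    have hxβ : (0:ℝ) < x ^ β := rpow_pos_of_pos hx0 _
    have hle : 4 * a ^ β ≤ x ^ β := by
      rw [← hcβ]; exact rpow_le_rpow hc.le (le_of_lt hx) hβ.le
    have hmin : a ^ β / x ^ β ≤ 1/4 := by
      rw [div_le_iff₀ hxβ]; linarith
    rw [min_eq_right hmin, div_rpow (by positivity) (by positivity),
      ← rpow_mul ha.le, ← rpow_mul hx0.le, rpow_sub hx0]
    ring
  -- integrability on pieces
  have hint1 : IntegrableOn (fun x => x ^ α * (min (1/4) (a ^ β / x ^ β)) ^ k)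
      (Set.Ioc (0:ℝ) c) := by
    refine (IntegrableOn.congr_fun ?_ (fun x hx => (heq1 x hx).symm) measurableSet_Ioc)
    exact ((intervalIntegral.intervalIntegrable_rpow' (by linarith : (-1:ℝ) < α)).1.const_mul _)
  have hint2 : IntegrableOn (fun x => x ^ α * (min (1/4) (a ^ β / x ^ β)) ^ k)
      (Set.Ioi c) := by
    refine (IntegrableOn.congr_fun ?_ (fun x hx => (heq2 x hx).symm) measurableSet_Ioi)
    exact ((integrableOn_Ioi_rpow_of_lt (by linarith : α - β * k < -1) hc).const_mul _)
  have key : (∫ t : ℝ, |t| ^ α * (min (1 / 4) (a ^ β / |t| ^ β)) ^ k)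
      = 2 * ∫ x in Set.Ioi (0:ℝ), x ^ α * (min (1/4) (a ^ β / x ^ β)) ^ k :=
    integral_comp_abs (f := fun x => x ^ α * (min (1/4) (a ^ β / x ^ β)) ^ k)
  rw [key, ← Set.Ioc_union_Ioi_eq_Ioi hc.le,
    setIntegral_union (Set.Ioc_disjoint_Ioi le_rfl) measurableSet_Ioi hint1 hint2,
    setIntegral_congr_fun measurableSet_Ioc heq1,
    setIntegral_congr_fun measurableSet_Ioi heq2,
    integral_const_mul, integral_const_mul,
    ← intervalIntegral.integral_of_le hc.le,
    integral_rpow (Or.inl (by linarith : (-1:ℝ) < α)),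
    integral_Ioi_rpow_of_lt (by linarith : α - β * k < -1) hc]
  have hz : (0:ℝ) ^ (α + 1) = 0 := zero_rpow (by positivity)
  rw [hz]
  -- remaining algebra
  have h4k : (0:ℝ) < (4:ℝ) ^ k := rpow_pos_of_pos (by norm_num) _
  have haβk : (0:ℝ) < a ^ (β * k) := rpow_pos_of_pos ha _
  have hckey : a ^ (β * k) * c ^ (α - β * k + 1) = c ^ (α + 1) / (4:ℝ) ^ k := by
    have : c ^ (α - β * k + 1) = c ^ (α + 1) / c ^ (β * k) := by
      rw [← rpow_sub hc]; ring_nf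
    rw [this, hcβk]
    field_simp
  have h14 : (1/4 : ℝ) ^ k = 1 / (4:ℝ) ^ k := by
    rw [div_rpow (by norm_num) (by norm_num), one_rpow]
  rw [h14]
  have hne1 : α + 1 ≠ 0 := by positivity
  have hne2 : β * k - α - 1 ≠ 0 := by linarith
  have hne3 : α - β * k + 1 ≠ 0 := by intro hh; apply hne2; linarith
  have expand : a ^ (β * k) * (-c ^ (α - β * k + 1) / (α - β * k + 1))
      = c ^ (α + 1) / (4:ℝ) ^ k / (β * k - α - 1) := by
    rw [neg_div, mul_neg, ← mul_div_assoc, hckey]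
    rw [div_div, div_div]
    rw [show (4:ℝ) ^ k * (α - β * k + 1) = -((4:ℝ) ^ k * (β * k - α - 1)) by ring,
      div_neg, neg_neg]
  rw [expand]
  field_simp
  ring
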